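/- Let X be a finite δ-hyperbolic metric space with δ > 0, ordered by distance to a base point p = x₁ < ⋯ < xₙ (so xᵢ < xⱼ implies d(xᵢ,p) ≤ d(xⱼ,p)). Suppose X is ν-geodesic, let t ≥ 4δ+2ν, and suppose d(xᵢ,p) ≥ t. Then there exists z ∈ {x₁,…,x_{i−1}} with d(z,xᵢ) ≤ 2δ+2ν such that every y ∈ {x₁,…,xᵢ} with d(y,xᵢ) ≤ t satisfies d(y,z) ≤ t. -/
import Mathlib


def IsDeltaHyperbolic (X : Type*) [MetricSpace X] (δ : ℝ) : Prop :=
  ∀ w x y z : X,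
    dist w x + dist y z ≤ max (dist w y + dist x z) (dist w z + dist x y) + 2 * δ

def IsGeodesicWithDefect (X : Type*) [MetricSpace X] (ν : ℝ) : Prop :=
  ∀ x y : X, ∀ r s : ℝ, 0 ≤ r → 0 ≤ s → r + s = dist x y →
    ∃ z : X, dist x z ≤ r + ν ∧ dist y z ≤ s + ν

/-- Key geometric step of the filtered contractibility lemma: if `X` is a finite
`δ`-hyperbolic `ν`-geodesic metric space enumerated as `x 0 < ⋯ < x n` by
nondecreasing distance to the base point `p = x 0`, `t ≥ 4δ + 2ν`, and
`d(x i, p) ≥ t`, then there is an earlier point `z = x j`, `j < i`, with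
`d(z, x i) ≤ 2δ + 2ν` such that every `y = x k` with `k ≤ i` and
`d(y, x i) ≤ t` satisfies `d(y, z) ≤ t`. -/
theorem stmt7 (X : Type*) [MetricSpace X] [Fintype X] (δ ν t : ℝ) (hδ : 0 < δ)
    (hhyp : IsDeltaHyperbolic X δ) (hgeo : IsGeodesicWithDefect X ν) (hν : 0 ≤ ν)
    (ht : 4 * δ + 2 * ν ≤ t) (n : ℕ) (x : Fin (n + 1) → X)
    (hbij : Function.Bijective x)
    (hord : ∀ j k : Fin (n + 1), j ≤ k → dist (x j) (x 0) ≤ dist (x k) (x 0))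
    (i : Fin (n + 1)) (hi : t ≤ dist (x i) (x 0)) :
    ∃ j : Fin (n + 1), j < i ∧ dist (x j) (x i) ≤ 2 * δ + 2 * ν ∧
      ∀ k : Fin (n + 1), k ≤ i → dist (x k) (x i) ≤ t → dist (x k) (x j) ≤ t := by
  set D := dist (x i) (x 0) with hD
  obtain ⟨z, hz1, hz2⟩ := hgeo (x i) (x 0) (2 * δ + ν) (D - (2 * δ + ν))
    (by linarith) (by linarith) (by ring)
  obtain ⟨j, rfl⟩ := hbij.surjective z
  have hj1 : dist (x i) (x j) ≤ 2 * δ + 2 * ν := by linarith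
  have hj0 : dist (x j) (x 0) ≤ D - 2 * δ := by
    rw [dist_comm] at hz2; linarith
  have hji : j < i := by
    by_contra h
    push_neg at h
    have := hord i j h
    linarith
  refine ⟨j, hji, by rw [dist_comm]; exact hj1, fun k hk hkt => ?_⟩
  have hyp := hhyp (x k) (x j) (x 0) (x i)
  have hk0 : dist (x k) (x 0) ≤ D := hord k i hk
  have hj1' : dist (x j) (x i) ≤ 2 * δ + 2 * ν := by rw [dist_comm]; exact hj1
  rcases max_cases (dist (x k) (x 0) + dist (x j) (x i))
      (dist (x k) (x i) + dist (x j) (x 0)) with ⟨he, _⟩ | ⟨he, _⟩ <;>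
    rw [he] at hyp <;> rw [dist_comm (x 0) (x i)] at hyp <;> linarith
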